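/- Cheeger's inequality (easy direction): for a finite $d$-regular graph $G$ with Laplacian $L_G$ (with $L_G(u,u)=1$, $L_G(u,v)=-1/d$ for edges), the second smallest eigenvalue $\lambda_G = \min_{x \perp \mathbf{1}} \frac{\langle x, L_G x\rangle}{\|x\|^2}$ satisfies $\lambda_G \le h_G$, where $h_G$ is the edge expansion of $G$. -/

import Mathlib

open Finset
open scoped Classical

/-- The set of edges of `G` crossing the cut `(X, V \ X)`. -/
noncomputable def cutEdges {V : Type*} [Fintype V] (G : SimpleGraph V)
    (X : Finset V) : Finset (Sym2 V) :=
  G.edgeFinset.filter (fun e => ∃ a b, e = s(a, b) ∧ a ∈ X ∧ b ∉ X)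

/-- The Laplacian of a `d`-regular graph applied to `x : V → ℝ`:
`(L x) v = x v - (1/d) ∑_{w ~ v} x w`. -/
noncomputable def lap {V : Type*} [Fintype V] (G : SimpleGraph V) (d : ℕ)
    (x : V → ℝ) (v : V) : ℝ :=
  x v - (1 / (d : ℝ)) * ∑ w ∈ G.neighborFinset v, x w

lemma cut_count {V : Type*} [Fintype V] (G : SimpleGraph V) (X : Finset V) :
    ∑ v ∈ X, ((G.neighborFinset v) \ X).card = (cutEdges G X).card := by
  classical
  rw [← Finset.card_sigma]
  apply Finset.card_bij (fun p _ => s(p.1, p.2))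
  · rintro ⟨v, w⟩ hp
    rw [Finset.mem_sigma] at hp
    obtain ⟨hv, hw⟩ := hp
    rw [Finset.mem_sdiff, SimpleGraph.mem_neighborFinset] at hw
    simp only [cutEdges, Finset.mem_filter, SimpleGraph.mem_edgeFinset,
      SimpleGraph.mem_edgeSet]
    exact ⟨hw.1, v, w, rfl, hv, hw.2⟩
  · rintro ⟨v, w⟩ hp ⟨v', w'⟩ hp' heq
    rw [Finset.mem_sigma, Finset.mem_sdiff] at hp hp'
    rw [Sym2.eq_iff] at heq
    rcases heq with ⟨rfl, rfl⟩ | ⟨rfl, rfl⟩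
    · rfl
    · exact absurd hp.1 hp'.2.2
  · intro e he
    simp only [cutEdges, Finset.mem_filter, SimpleGraph.mem_edgeFinset,
      SimpleGraph.mem_edgeSet] at he
    obtain ⟨hadj, a, b, rfl, ha, hb⟩ := he
    rw [SimpleGraph.mem_edgeSet] at hadj
    exact ⟨⟨a, b⟩, Finset.mem_sigma.mpr ⟨ha,
      Finset.mem_sdiff.mpr ⟨(G.mem_neighborFinset a b).mpr hadj, hb⟩⟩, rfl⟩

lemma nbr_sum_swap {V : Type*} [Fintype V] (G : SimpleGraph V) (f : V → ℝ) :
    ∑ v, ∑ w ∈ G.neighborFinset v, f w = ∑ w, (G.degree w : ℝ) * f w := by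
  classical
  have h1 : ∀ v : V, ∑ w ∈ G.neighborFinset v, f w
      = ∑ w, if G.Adj v w then f w else 0 := by
    intro v
    rw [SimpleGraph.neighborFinset_eq_filter, Finset.sum_filter]
  simp_rw [h1]
  rw [Finset.sum_comm]
  refine Finset.sum_congr rfl fun w _ => ?_
  have h2 : ∀ v : V, (if G.Adj v w then f w else 0) = (if G.Adj w v then f w else 0) := by
    intro v; rw [G.adj_comm]
  simp_rw [h2]
  rw [← Finset.sum_filter, Finset.sum_const, nsmul_eq_mul]
  congr 1
  rw [← SimpleGraph.card_neighborFinset_eq_degree, SimpleGraph.neighborFinset_eq_filter]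


set_option maxHeartbeats 1000000 in
/-- Cheeger's inequality, easy direction: `λ_G ≤ h_G` for a `d`-regular graph,
where `λ_G = min_{x ⊥ 1, x ≠ 0} ⟨x, L_G x⟩ / ‖x‖²` and `h_G` is the edge
expansion `min_{∅ ≠ X ⊊ V} (|δ(X)|/|E|) / (min(|X|,|V∖X|)/|V|)`. -/
theorem cheeger_easy_direction {V : Type*} [Fintype V] (G : SimpleGraph V)
    (d : ℕ) (hd : 1 ≤ d) (hreg : G.IsRegularOfDegree d)
    (hV : 2 ≤ Fintype.card V) (hE : 0 < G.edgeFinset.card)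
    (lam h : ℝ)
    -- `lam` is the minimum of the Rayleigh quotient over nonzero `x ⊥ 1`:
    (hlam_le : ∀ x : V → ℝ, x ≠ 0 → (∑ v, x v) = 0 →
      lam ≤ (∑ v, x v * lap G d x v) / (∑ v, (x v) ^ 2))
    (hlam_mem : ∃ x : V → ℝ, x ≠ 0 ∧ (∑ v, x v) = 0 ∧
      lam = (∑ v, x v * lap G d x v) / (∑ v, (x v) ^ 2))
    -- `h` is the minimum of the cut ratio over nontrivial cuts:
    (hh_le : ∀ X : Finset V, X.Nonempty → X ≠ univ →
      h ≤ (((cutEdges G X).card : ℝ) / (G.edgeFinset.card : ℝ)) /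
            (min (X.card : ℝ) ((Xᶜ).card : ℝ) / (Fintype.card V : ℝ)))
    (hh_mem : ∃ X : Finset V, X.Nonempty ∧ X ≠ univ ∧
      h = (((cutEdges G X).card : ℝ) / (G.edgeFinset.card : ℝ)) /
            (min (X.card : ℝ) ((Xᶜ).card : ℝ) / (Fintype.card V : ℝ))) :
    lam ≤ h := by
  classical
  obtain ⟨X, hXne, hXuniv, hh⟩ := hh_mem
  set n := Fintype.card V with hn_def
  set k := X.card with hk_def
  set m := (Xᶜ).card with hm_def
  have hk : 0 < k := Finset.card_pos.mpr hXne
  have hkn : k < n := by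
    have := Finset.card_lt_card (Finset.ssubset_univ_iff.mpr hXuniv)
    simpa [hn_def, hk_def, Finset.card_univ] using this
  have hm : 0 < m := by rw [hm_def, Finset.card_compl]; omega
  have hkm : k + m = n := Finset.card_add_card_compl X
  have hn : 0 < n := by omega
  -- real casts
  have hnR : (0:ℝ) < n := by exact_mod_cast hn
  have hkR : (0:ℝ) < k := by exact_mod_cast hk
  have hmR : (0:ℝ) < m := by exact_mod_cast hm
  have hdR : (0:ℝ) < d := by exact_mod_cast hd
  have hkmR : (k:ℝ) + m = n := by exact_mod_cast hkm
  have hER : (0:ℝ) < (G.edgeFinset.card : ℝ) := by exact_mod_cast hE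
  set E : ℝ := (G.edgeFinset.card : ℝ) with hE_def
  -- handshake
  have hhs : (n:ℝ) * d = 2 * E := by
    have := G.sum_degrees_eq_twice_card_edges
    have h2 : ∑ v : V, G.degree v = n * d := by
      rw [Finset.sum_congr rfl fun v _ => hreg v, Finset.sum_const,
        Finset.card_univ, smul_eq_mul]
    rw [h2] at this
    rw [hE_def]
    exact_mod_cast this
  -- indicator and test vector
  set c : ℝ := (k:ℝ) / n with hc_def
  set χ : V → ℝ := fun v => if v ∈ X then (1:ℝ) else 0 with hχ_def
  set x : V → ℝ := fun v => χ v - c with hx_def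
  set T : V → ℝ := fun v => ∑ w ∈ G.neighborFinset v, χ w with hT_def
  set C : ℝ := ((cutEdges G X).card : ℝ) with hC_def
  have hC0 : (0:ℝ) ≤ C := by positivity
  have hcard : ∀ v : V, ((G.neighborFinset v).card : ℝ) = d := by
    intro v; exact_mod_cast congrArg Nat.cast (hreg v)
  have hχsum : ∑ v, χ v = k := by
    simp only [hχ_def]
    rw [Finset.sum_ite_mem, Finset.univ_inter, Finset.sum_const, nsmul_eq_mul, mul_one]
  -- T v = d - |N(v) \ X|
  have hTd : ∀ v : V, T v = (d:ℝ) - ((G.neighborFinset v \ X).card : ℝ) := by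
    intro v
    have h1 : T v = ((G.neighborFinset v ∩ X).card : ℝ) := by
      simp only [hT_def, hχ_def]
      rw [Finset.sum_ite_mem, Finset.sum_const, nsmul_eq_mul, mul_one]
    have h2 : (G.neighborFinset v \ X).card + (G.neighborFinset v ∩ X).card
        = (G.neighborFinset v).card := Finset.card_sdiff_add_card_inter _ _
    have h3 := hcard v
    rw [h1]
    have := congrArg (Nat.cast (R := ℝ)) h2
    push_cast at this
    linarith
  -- sum of T
  have hTsum : ∑ v, T v = (d:ℝ) * k := by
    simp only [hT_def]
    rw [nbr_sum_swap]
    have : ∀ w : V, (G.degree w : ℝ) * χ w = (d:ℝ) * χ w := by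
      intro w; rw [hreg w]
    rw [Finset.sum_congr rfl fun w _ => this w, ← Finset.mul_sum, hχsum]
  -- sum of χ * T
  have hχT : ∑ v, χ v * T v = (d:ℝ) * k - C := by
    have h1 : ∑ v, χ v * T v = ∑ v ∈ X, T v := by
      simp only [hχ_def, ite_mul, one_mul, zero_mul]
      rw [Finset.sum_ite_mem, Finset.univ_inter]
    have h2 : ∑ v ∈ X, T v = (d:ℝ) * k - C := by
      rw [Finset.sum_congr rfl fun v _ => hTd v, Finset.sum_sub_distrib,
        Finset.sum_const, nsmul_eq_mul]
      have h3 : ∑ v ∈ X, ((G.neighborFinset v \ X).card : ℝ) = C := by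
        rw [hC_def, ← cut_count]
        push_cast
        ring
      rw [h3]
      ring
    rw [h1, h2]
  -- sum of x
  have hxsum : ∑ v, x v = 0 := by
    simp only [hx_def]
    rw [Finset.sum_sub_distrib, hχsum, Finset.sum_const, Finset.card_univ,
      nsmul_eq_mul, hc_def]
    field_simp
    rw [← hn_def]; ring
  -- sum of x²
  have hχsq : ∀ v, χ v ^ 2 = χ v := by
    intro v; simp only [hχ_def]; by_cases hv : v ∈ X <;> simp [hv]
  have hx2 : ∑ v, (x v) ^ 2 = (k:ℝ) * m / n := by
    have h1 : ∀ v, (x v) ^ 2 = χ v - 2 * c * χ v + c ^ 2 := by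
      intro v
      simp only [hx_def]
      linear_combination hχsq v
    rw [Finset.sum_congr rfl fun v _ => h1 v]
    rw [Finset.sum_add_distrib, Finset.sum_sub_distrib, hχsum, ← Finset.mul_sum, hχsum,
      Finset.sum_const, Finset.card_univ, nsmul_eq_mul]
    rw [hc_def]
    have hmn : (m:ℝ) = n - k := by linarith
    rw [hmn]
    field_simp
    ring
  have hx2pos : 0 < ∑ v, (x v) ^ 2 := by rw [hx2]; positivity
  -- x ≠ 0
  have hxne : x ≠ 0 := by
    obtain ⟨v0, hv0⟩ := hXne
    intro h0
    have h1 : x v0 = 0 := by rw [h0]; rfl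
    have h2 : x v0 = 1 - c := by simp only [hx_def, hχ_def, if_pos hv0]
    have hc1 : c < 1 := by
      rw [hc_def, div_lt_one hnR]
      have : k < n := by omega
      exact_mod_cast this
    rw [h2] at h1
    linarith
  -- the numerator
  have hnum : ∑ v, x v * lap G d x v = C / d := by
    have hNv : ∀ v : V, ∑ w ∈ G.neighborFinset v, x w = T v - (d:ℝ) * c := by
      intro v
      simp only [hx_def]
      rw [Finset.sum_sub_distrib, Finset.sum_const, nsmul_eq_mul]
      rw [hcard v, hT_def]
    have h1 : ∀ v : V, x v * lap G d x v
        = (x v) ^ 2 - (1/(d:ℝ)) * (x v * T v) + c * x v := by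
      intro v
      rw [lap, hNv v]
      field_simp
      ring
    rw [Finset.sum_congr rfl fun v _ => h1 v, Finset.sum_add_distrib,
      Finset.sum_sub_distrib, ← Finset.mul_sum, ← Finset.mul_sum, hxsum, mul_zero]
    have hxT : ∑ v, x v * T v = ((d:ℝ) * k - C) - c * ((d:ℝ) * k) := by
      have : ∀ v, x v * T v = χ v * T v - c * T v := by
        intro v; simp only [hx_def]; ring
      rw [Finset.sum_congr rfl fun v _ => this v, Finset.sum_sub_distrib,
        ← Finset.mul_sum, hχT, hTsum]
    rw [hxT, hx2]
    have hmn : (m:ℝ) = n - k := by linarith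
    rw [hmn, hc_def]
    field_simp
    ring
  -- apply lam bound
  have hlam : lam ≤ (C / d) / ((k:ℝ) * m / n) := by
    have := hlam_le x hxne hxsum
    rwa [hnum, hx2] at this
  -- inequality between the two quotients
  set μ : ℝ := min (k:ℝ) (m:ℝ) with hμ_def
  have hμpos : 0 < μ := lt_min hkR hmR
  have hmin : (n:ℝ) * μ ≤ 2 * ((k:ℝ) * m) := by
    rcases le_total (k:ℝ) (m:ℝ) with hle | hle
    · rw [hμ_def, min_eq_left hle]
      have h1 : (n:ℝ) * k = k * k + m * k := by rw [← hkmR]; ring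
      have h2 : (k:ℝ) * k ≤ m * k := mul_le_mul_of_nonneg_right hle hkR.le
      linarith
    · rw [hμ_def, min_eq_right hle]
      have h1 : (n:ℝ) * m = k * m + m * m := by rw [← hkmR]; ring
      have h2 : (m:ℝ) * m ≤ k * m := mul_le_mul_of_nonneg_right hle hmR.le
      linarith
  have hfinal : (C / d) / ((k:ℝ) * m / n) ≤ (C / E) / (μ / n) := by
    rw [div_le_div_iff₀ (by positivity) (by positivity)]
    rw [div_mul_div_comm, div_mul_div_comm]
    rw [div_le_div_iff₀ (by positivity) (by positivity)]
    have hdn : (d:ℝ) * n = 2 * E := by linarith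
    have key : C * E * ((n:ℝ) * μ) ≤ C * E * (2 * ((k:ℝ) * m)) :=
      mul_le_mul_of_nonneg_left hmin (mul_nonneg hC0 hER.le)
    nlinarith [key, hdn, mul_nonneg hC0 (mul_nonneg hkR.le hmR.le)]
  rw [hh]
  exact hlam.trans hfinal
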